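/- Let m, n ≥ 1 be integers with m + n ≥ 2, and let x ∈ ℂ. Then B_m(x)·B_n(x) = ∑_{r=0}^{⌊(m+n)/2⌋} (C(m,2r)·n + C(n,2r)·m) · B_{2r}·B_{m+n−2r}(x)/(m+n−2r) + (−1)^{m+1}·(m!·n!/(m+n)!)·B_{m+n}, where B_{2r} denotes the (2r)-th Bernoulli number and terms with C(m,2r) = C(n,2r) = 0 vanish (in particular every term with 2r = m+n vanishes, since m, n ≥ 1). -/

import Mathlib

open Finset

namespace NielsenAux

open Polynomial

/-- Formal antiderivative of a rational polynomial. -/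
noncomputable def antider (p : ℚ[X]) : ℚ[X] :=
  p.sum fun k a => Polynomial.C (a / (k + 1)) * X ^ (k + 1)

lemma derivative_antider (p : ℚ[X]) : derivative (antider p) = p := by
  conv_rhs => rw [← p.sum_C_mul_X_pow_eq]
  rw [antider, Polynomial.sum, map_sum, Polynomial.sum]
  refine Finset.sum_congr rfl fun k _ => ?_
  rw [derivative_C_mul, derivative_X_pow, Nat.add_sub_cancel, ← mul_assoc, ← C_mul]
  congr 2
  have : ((k : ℚ) + 1) ≠ 0 := by positivity
  push_cast
  field_simp

/-- Formal integral over `[0,1]`. -/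
noncomputable def L (p : ℚ[X]) : ℚ := (antider p).eval 1 - (antider p).eval 0

lemma L_eq {p P : ℚ[X]} (h : derivative P = p) : L p = P.eval 1 - P.eval 0 := by
  have h2 : derivative (antider p - P) = 0 := by
    rw [derivative_sub, derivative_antider, h, sub_self]
  have h3 := Polynomial.eq_C_of_derivative_eq_zero h2
  have e1 := congrArg (eval 1) h3
  have e0 := congrArg (eval 0) h3
  simp only [eval_sub, eval_C] at e1 e0
  unfold L
  linarith

lemma L_add (p q : ℚ[X]) : L (p + q) = L p + L q := by
  have : L (p + q) = (antider p + antider q).eval 1 - (antider p + antider q).eval 0 :=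
    L_eq (by rw [derivative_add, derivative_antider, derivative_antider])
  rw [this]
  simp only [eval_add]
  unfold L
  ring

lemma L_C_mul (s : ℚ) (p : ℚ[X]) : L (Polynomial.C s * p) = s * L p := by
  have : L (Polynomial.C s * p) =
      (Polynomial.C s * antider p).eval 1 - (Polynomial.C s * antider p).eval 0 :=
    L_eq (by rw [derivative_C_mul, derivative_antider])
  rw [this]
  simp only [eval_mul, eval_C]
  unfold L
  ring

lemma L_C (a : ℚ) : L (Polynomial.C a) = a := by
  have : L (Polynomial.C a) = (Polynomial.C a * X).eval 1 - (Polynomial.C a * X).eval 0 :=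
    L_eq (by simp)
  rw [this]; simp

lemma L_sum {α : Type*} (s : Finset α) (f : α → ℚ[X]) :
    L (∑ i ∈ s, f i) = ∑ i ∈ s, L (f i) := by
  classical
  induction s using Finset.induction with
  | empty => simpa using L_C 0
  | insert a s h ih => rw [Finset.sum_insert h, Finset.sum_insert h, L_add, ih]

lemma L_bernoulli {k : ℕ} (hk : 1 ≤ k) : L (Polynomial.bernoulli k) = 0 := by
  have hne : ((k : ℚ) + 1) ≠ 0 := by positivity
  have : L (Polynomial.bernoulli k) =
      (Polynomial.C ((k + 1 : ℚ))⁻¹ * Polynomial.bernoulli (k + 1)).eval 1 -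
      (Polynomial.C ((k + 1 : ℚ))⁻¹ * Polynomial.bernoulli (k + 1)).eval 0 := by
    refine L_eq ?_
    rw [derivative_C_mul, derivative_bernoulli_add_one, ← mul_assoc, ← Polynomial.C_eq_natCast,
      show (C (k : ℚ) + 1 : ℚ[X]) = C ((k : ℚ) + 1) by rw [C_add, C_1],
      ← C_mul, inv_mul_cancel₀ hne, C_1, one_mul]
  rw [this]
  simp only [eval_mul, eval_C, bernoulli_eval_one, bernoulli_eval_zero]
  rw [bernoulli_eq_bernoulli'_of_ne_one (by omega)]
  ring

end NielsenAux

namespace NielsenAux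
open Polynomial

lemma parts (a b : ℕ) :
    ((a : ℚ) + 1) * L (Polynomial.bernoulli a * Polynomial.bernoulli (b + 1)) +
      ((b : ℚ) + 1) * L (Polynomial.bernoulli (a + 1) * Polynomial.bernoulli b) =
    bernoulli' (a + 1) * bernoulli' (b + 1) -
      _root_.bernoulli (a + 1) * _root_.bernoulli (b + 1) := by
  have hD : derivative (Polynomial.bernoulli (a + 1) * Polynomial.bernoulli (b + 1)) =
      Polynomial.C ((a : ℚ) + 1) * (Polynomial.bernoulli a * Polynomial.bernoulli (b + 1)) +
      Polynomial.C ((b : ℚ) + 1) * (Polynomial.bernoulli (a + 1) * Polynomial.bernoulli b) := by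
    simp only [derivative_mul, derivative_bernoulli_add_one, map_add, map_natCast, C_1]
    push_cast
    ring
  have hL := L_eq hD
  rw [L_add, L_C_mul, L_C_mul] at hL
  rw [hL]
  simp

lemma L_mul_bernoulli (m : ℕ) (hm : 1 ≤ m) : ∀ n : ℕ, 1 ≤ n →
    L (Polynomial.bernoulli m * Polynomial.bernoulli n) =
      (-1) ^ (m + 1) * ((m.factorial : ℚ) * (n.factorial : ℚ) / ((m + n).factorial : ℚ)) *
        _root_.bernoulli (m + n) := by
  induction m, hm using Nat.le_induction with
  | base =>
    intro n hn
    have key := parts 0 n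
    simp only [Nat.cast_zero, zero_add, Polynomial.bernoulli_zero, one_mul] at key
    rw [L_bernoulli (by omega), bernoulli'_one, _root_.bernoulli_one,
      ← bernoulli_eq_bernoulli'_of_ne_one (show n + 1 ≠ 1 by omega)] at key
    have hne : ((n : ℚ) + 1) ≠ 0 := by positivity
    have hfac : ((n.factorial : ℚ)) ≠ 0 := by exact_mod_cast n.factorial_ne_zero
    apply mul_left_cancel₀ hne
    have hkey2 : ((n : ℚ) + 1) * L (Polynomial.bernoulli 1 * Polynomial.bernoulli n) =
        _root_.bernoulli (n + 1) := by linarith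
    rw [hkey2, show 1 + n = n + 1 by omega]
    push_cast [Nat.factorial_succ, Nat.factorial_one]
    field_simp
    ring
  | succ m hm ih =>
    intro n hn
    have key := parts m n
    have hIH := ih (n + 1) (by omega)
    have hmn : m + (n + 1) = m + 1 + n := by omega
    rw [hmn] at hIH
    rw [hIH, ← bernoulli_eq_bernoulli'_of_ne_one (show m + 1 ≠ 1 by omega),
      ← bernoulli_eq_bernoulli'_of_ne_one (show n + 1 ≠ 1 by omega), sub_self] at key
    have hne : ((n : ℚ) + 1) ≠ 0 := by positivity
    have hfacn : ((n.factorial : ℚ)) ≠ 0 := by exact_mod_cast n.factorial_ne_zero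
    have hfacm : ((m.factorial : ℚ)) ≠ 0 := by exact_mod_cast m.factorial_ne_zero
    have hfacmn : (((m + 1 + n).factorial : ℚ)) ≠ 0 := by
      exact_mod_cast (m + 1 + n).factorial_ne_zero
    apply mul_left_cancel₀ hne
    have h3 : ((n : ℚ) + 1) *
        L (Polynomial.bernoulli (m + 1) * Polynomial.bernoulli n) =
        -(((m : ℚ) + 1) * ((-1) ^ (m + 1) *
          ((m.factorial : ℚ) * (((n + 1).factorial : ℚ)) / (((m + 1 + n).factorial : ℚ))) *
          _root_.bernoulli (m + 1 + n))) := by linarith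
    rw [h3]
    push_cast [Nat.factorial_succ, pow_succ]
    field_simp

end NielsenAux

namespace NielsenAux
open Polynomial

lemma L_sub (p q : ℚ[X]) : L (p - q) = L p - L q := by
  have : L (p - q) = (antider p - antider q).eval 1 - (antider p - antider q).eval 0 :=
    L_eq (by rw [derivative_sub, derivative_antider, derivative_antider])
  rw [this]
  simp only [eval_sub]
  unfold L
  ring

/-- coefficient in Nielsen's formula -/
noncomputable def c (m n r : ℕ) : ℚ :=
  ((m.choose (2 * r) : ℚ) * n + (n.choose (2 * r) : ℚ) * m) * _root_.bernoulli (2 * r) /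
    ((m + n - 2 * r : ℕ) : ℚ)

noncomputable def S (m n : ℕ) : ℚ[X] :=
  ∑ r ∈ Finset.range ((m + n) / 2 + 1),
    Polynomial.C (c m n r) * Polynomial.bernoulli (m + n - 2 * r)

noncomputable def Kc (m n : ℕ) : ℚ :=
  (-1) ^ (m + 1) * ((m.factorial : ℚ) * (n.factorial : ℚ) / ((m + n).factorial : ℚ)) *
    _root_.bernoulli (m + n)

lemma c_mul {m n : ℕ} (hm : 1 ≤ m) (hn : 1 ≤ n) (r : ℕ) :
    c m n r * ((m + n - 2 * r : ℕ) : ℚ) =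
      ((m.choose (2 * r) : ℚ) * n + (n.choose (2 * r) : ℚ) * m) * _root_.bernoulli (2 * r) := by
  by_cases h : m + n - 2 * r = 0
  · have h1 : m.choose (2 * r) = 0 := Nat.choose_eq_zero_of_lt (by omega)
    have h2 : n.choose (2 * r) = 0 := Nat.choose_eq_zero_of_lt (by omega)
    simp [c, h1, h2]
  · have hne : ((m + n - 2 * r : ℕ) : ℚ) ≠ 0 := Nat.cast_ne_zero.mpr h
    rw [c, div_mul_cancel₀ _ hne]

lemma bernoulli_eval (k : ℕ) (x : ℚ) : (Polynomial.bernoulli k).eval x =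
    ∑ i ∈ Finset.range (k + 1), _root_.bernoulli i * (k.choose i : ℚ) * x ^ (k - i) := by
  simp [Polynomial.bernoulli, eval_finset_sum, eval_monomial]

lemma delta_sum (m n : ℕ) (hm : 1 ≤ m) (hn : 1 ≤ n) (x : ℚ) :
    ∑ r ∈ Finset.range ((m + n) / 2 + 1),
      (((m.choose (2 * r) : ℚ) * n + (n.choose (2 * r) : ℚ) * m) * _root_.bernoulli (2 * r)) *
        x ^ (m + n - 2 * r - 1) =
    (m : ℚ) * x ^ (m - 1) * (Polynomial.bernoulli n).eval x +
      (n : ℚ) * x ^ (n - 1) * (Polynomial.bernoulli m).eval x +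
      (m : ℚ) * n * x ^ (m + n - 2) := by
  set f : ℕ → ℚ := fun j =>
    (((m.choose j : ℚ) * n + (n.choose j : ℚ) * m) * _root_.bernoulli j) * x ^ (m + n - 1 - j)
    with hf
  have hA : ∑ r ∈ Finset.range ((m + n) / 2 + 1),
      (((m.choose (2 * r) : ℚ) * n + (n.choose (2 * r) : ℚ) * m) * _root_.bernoulli (2 * r)) *
        x ^ (m + n - 2 * r - 1) =
      ∑ j ∈ (Finset.range (m + n + 1)).filter (fun j => Even j), f j := by
    refine Finset.sum_nbij' (fun r => 2 * r) (fun j => j / 2) ?_ ?_ ?_ ?_ ?_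
    · intro a ha
      simp only [Finset.mem_range] at ha
      have h3 := Nat.div_mul_le_self (m + n) 2
      simp only [Finset.mem_filter, Finset.mem_range]
      exact ⟨by omega, even_two_mul a⟩
    · intro b hb
      simp only [Finset.mem_filter, Finset.mem_range] at hb
      simp only [Finset.mem_range]
      obtain ⟨h1, k, hk⟩ := hb
      omega
    · intro a _
      omega
    · intro b hb
      simp only [Finset.mem_filter, Finset.mem_range] at hb
      obtain ⟨-, k, hk⟩ := hb
      omega
    · intro a ha
      have he : m + n - 2 * a - 1 = m + n - 1 - 2 * a := by omega
      simp only [hf, he]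
  rw [hA]
  have hodd : ∑ j ∈ (Finset.range (m + n + 1)).filter (fun j => ¬ Even j), f j =
      -((m : ℚ) * n * x ^ (m + n - 2)) := by
    rw [Finset.sum_eq_single_of_mem 1]
    · have he : m + n - 1 - 1 = m + n - 2 := by omega
      simp only [hf, he, Nat.choose_one_right, _root_.bernoulli_one]
      push_cast
      ring
    · simp only [Finset.mem_filter, Finset.mem_range]
      exact ⟨by omega, by simp⟩
    · intro j hj hjne
      simp only [Finset.mem_filter, Finset.mem_range] at hj
      have hoddj : Odd j := Nat.odd_iff.mpr (by
        have := hj.2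
        rcases Nat.even_or_odd j with h | h
        · exact absurd h this
        · exact Nat.odd_iff.mp h)
      have hb0 : _root_.bernoulli j = 0 := by
        rw [bernoulli_eq_bernoulli'_of_ne_one hjne]
        exact bernoulli'_eq_zero_of_odd hoddj (by rcases hoddj with ⟨k, hk⟩; omega)
      simp [hf, hb0]
  have hsplit2 : ∀ j ∈ Finset.range (m + n + 1), f j =
      (m : ℚ) * x ^ (m - 1) * (_root_.bernoulli j * (n.choose j : ℚ) * x ^ (n - j)) +
        (n : ℚ) * x ^ (n - 1) * (_root_.bernoulli j * (m.choose j : ℚ) * x ^ (m - j)) := by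
    intro j hj
    simp only [Finset.mem_range] at hj
    simp only [hf]
    by_cases h1 : j ≤ n
    · have p1 : x ^ (m - 1) * x ^ (n - j) = x ^ (m + n - 1 - j) := by
        rw [← pow_add]; congr 1; omega
      by_cases h2 : j ≤ m
      · have p2 : x ^ (n - 1) * x ^ (m - j) = x ^ (m + n - 1 - j) := by
          rw [← pow_add]; congr 1; omega
        linear_combination (-((n.choose j : ℚ) * (m : ℚ) * _root_.bernoulli j)) * p1 +
          (-((m.choose j : ℚ) * (n : ℚ) * _root_.bernoulli j)) * p2
      · have hcm : ((m.choose j : ℚ)) = 0 := by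
          rw [Nat.choose_eq_zero_of_lt (by omega)]; simp
        rw [hcm]
        linear_combination (-((n.choose j : ℚ) * (m : ℚ) * _root_.bernoulli j)) * p1
    · have hcn : ((n.choose j : ℚ)) = 0 := by
        rw [Nat.choose_eq_zero_of_lt (by omega)]; simp
      rw [hcn]
      by_cases h2 : j ≤ m
      · have p2 : x ^ (n - 1) * x ^ (m - j) = x ^ (m + n - 1 - j) := by
          rw [← pow_add]; congr 1; omega
        linear_combination (-((m.choose j : ℚ) * (n : ℚ) * _root_.bernoulli j)) * p2
      · have hcm : ((m.choose j : ℚ)) = 0 := by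
          rw [Nat.choose_eq_zero_of_lt (by omega)]; simp
        rw [hcm]
        ring
  have hsub_n : ∑ j ∈ Finset.range (m + n + 1),
      _root_.bernoulli j * (n.choose j : ℚ) * x ^ (n - j) = (Polynomial.bernoulli n).eval x := by
    rw [bernoulli_eval]
    rw [← Finset.sum_subset (Finset.range_subset_range.mpr (by omega : n + 1 ≤ m + n + 1))]
    intro j _ hj2
    simp only [Finset.mem_range, not_lt] at hj2
    rw [Nat.choose_eq_zero_of_lt (by omega)]
    simp
  have hsub_m : ∑ j ∈ Finset.range (m + n + 1),
      _root_.bernoulli j * (m.choose j : ℚ) * x ^ (m - j) = (Polynomial.bernoulli m).eval x := by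
    rw [bernoulli_eval]
    rw [← Finset.sum_subset (Finset.range_subset_range.mpr (by omega : m + 1 ≤ m + n + 1))]
    intro j _ hj2
    simp only [Finset.mem_range, not_lt] at hj2
    rw [Nat.choose_eq_zero_of_lt (by omega)]
    simp
  have htot : ∑ j ∈ Finset.range (m + n + 1), f j =
      (m : ℚ) * x ^ (m - 1) * (Polynomial.bernoulli n).eval x +
        (n : ℚ) * x ^ (n - 1) * (Polynomial.bernoulli m).eval x := by
    rw [Finset.sum_congr rfl hsplit2, Finset.sum_add_distrib, ← Finset.mul_sum, ← Finset.mul_sum,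
      hsub_n, hsub_m]
  have hsplit := Finset.sum_filter_add_sum_filter_not (Finset.range (m + n + 1))
    (fun j => Even j) f
  rw [hodd, htot] at hsplit
  linarith

end NielsenAux

namespace NielsenAux
open Polynomial

lemma eval_shift (m n : ℕ) (hm : 1 ≤ m) (hn : 1 ≤ n) (x : ℚ) :
    (Polynomial.bernoulli m * Polynomial.bernoulli n -
      (S m n + Polynomial.C (Kc m n))).eval (1 + x) =
    (Polynomial.bernoulli m * Polynomial.bernoulli n -
      (S m n + Polynomial.C (Kc m n))).eval x := by
  have hd := delta_sum m n hm hn x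
  simp only [eval_sub, eval_mul, eval_add, eval_C, S, eval_finset_sum, bernoulli_eval_one_add]
  have hsplit : ∑ r ∈ Finset.range ((m + n) / 2 + 1),
      c m n r * ((Polynomial.bernoulli (m + n - 2 * r)).eval x +
        ((m + n - 2 * r : ℕ) : ℚ) * x ^ (m + n - 2 * r - 1)) =
      (∑ r ∈ Finset.range ((m + n) / 2 + 1),
        c m n r * (Polynomial.bernoulli (m + n - 2 * r)).eval x) +
      ∑ r ∈ Finset.range ((m + n) / 2 + 1),
        (((m.choose (2 * r) : ℚ) * n + (n.choose (2 * r) : ℚ) * m) * _root_.bernoulli (2 * r)) *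
          x ^ (m + n - 2 * r - 1) := by
    rw [← Finset.sum_add_distrib]
    refine Finset.sum_congr rfl fun r _ => ?_
    rw [mul_add, ← mul_assoc, c_mul hm hn r]
  rw [hsplit, hd]
  have hpow : x ^ (m - 1) * x ^ (n - 1) = x ^ (m + n - 2) := by
    rw [← pow_add]; congr 1; omega
  linear_combination ((m : ℚ) * (n : ℚ)) * hpow

theorem nielsen_rat (m n : ℕ) (hm : 1 ≤ m) (hn : 1 ≤ n) :
    Polynomial.bernoulli m * Polynomial.bernoulli n = S m n + Polynomial.C (Kc m n) := by
  rw [← sub_eq_zero]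
  set q := Polynomial.bernoulli m * Polynomial.bernoulli n - (S m n + Polynomial.C (Kc m n))
    with hq
  have hshift : ∀ y : ℚ, q.eval (1 + y) = q.eval y := fun y => eval_shift m n hm hn y
  have hnat : ∀ k : ℕ, q.eval (k : ℚ) = q.eval 0 := by
    intro k
    induction k with
    | zero => norm_num
    | succ k ih =>
      have h2 : ((k + 1 : ℕ) : ℚ) = 1 + (k : ℚ) := by push_cast; ring
      rw [h2, hshift (k : ℚ), ih]
  have hqC : q = Polynomial.C (q.eval 0) := by
    apply Polynomial.eq_of_infinite_eval_eq
    apply Set.infinite_of_injective_forall_mem (f := fun k : ℕ => (k : ℚ))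
      (fun a b h => Nat.cast_injective h)
    intro k
    simp only [Set.mem_setOf_eq, eval_C]
    exact hnat k
  have hL0 : L q = 0 := by
    rw [hq, L_sub, L_add, L_C, L_mul_bernoulli m hm n hn]
    have hz : ∀ r ∈ Finset.range ((m + n) / 2 + 1),
        L (Polynomial.C (c m n r) * Polynomial.bernoulli (m + n - 2 * r)) = 0 := by
      intro r _
      rw [L_C_mul]
      by_cases h : m + n - 2 * r = 0
      · have hc0 : c m n r = 0 := by rw [c, h]; simp
        rw [hc0, zero_mul]
      · rw [L_bernoulli (by omega), mul_zero]
    rw [show L (S m n) = 0 by rw [S, L_sum, Finset.sum_eq_zero hz]]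
    rw [Kc]
    ring
  rw [hqC] at hL0 ⊢
  rw [L_C] at hL0
  rw [hL0, map_zero]

end NielsenAux

open Finset

/-- The Bernoulli polynomials evaluated at a complex number, with the convention
`B₁(0) = -1/2`. -/
noncomputable def bernoulliPoly (n : ℕ) (x : ℂ) : ℂ :=
  Polynomial.aeval x (Polynomial.bernoulli n)

/-- Nielsen's formula for the product of two Bernoulli polynomials. -/
theorem bernoulli_poly_product (m n : ℕ) (hm : 1 ≤ m) (hn : 1 ≤ n) (hmn : 2 ≤ m + n)
    (x : ℂ) :
    bernoulliPoly m x * bernoulliPoly n x =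
      (∑ r ∈ Finset.range ((m + n) / 2 + 1),
        ((m.choose (2 * r) : ℂ) * n + (n.choose (2 * r) : ℂ) * m) *
          ((bernoulli (2 * r) : ℂ) * bernoulliPoly (m + n - 2 * r) x /
            ((m + n - 2 * r : ℕ) : ℂ))) +
      (-1 : ℂ) ^ (m + 1) * ((m.factorial : ℂ) * (n.factorial : ℂ) /
        ((m + n).factorial : ℂ)) * (bernoulli (m + n) : ℂ) := by
  have hmap : ∀ q : ℚ, algebraMap ℚ ℂ q = (q : ℂ) := fun q => eq_ratCast (algebraMap ℚ ℂ) q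
  calc bernoulliPoly m x * bernoulliPoly n x
      = Polynomial.aeval x (Polynomial.bernoulli m * Polynomial.bernoulli n) := by
        rw [map_mul]; rfl
    _ = Polynomial.aeval x (NielsenAux.S m n + Polynomial.C (NielsenAux.Kc m n)) := by
        rw [NielsenAux.nielsen_rat m n hm hn]
    _ = _ := by
        simp only [NielsenAux.S, NielsenAux.Kc, map_add, map_sum, map_mul, Polynomial.aeval_C]
        congr 1
        · refine Finset.sum_congr rfl fun r _ => ?_
          simp only [hmap, NielsenAux.c]
          push_cast
          show _ = _ * (_ * Polynomial.aeval x (Polynomial.bernoulli (m + n - 2 * r)) / _)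
          ring
        · simp only [hmap]
          push_cast
          ring
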